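/- Let ℤ_{θ_1} denote the ℤG-module whose underlying abelian group is ℤ with G acting through the homomorphism θ_1: G → Aut(ℤ) = {±1} determined by θ_1(a_1) = −1 and θ_1(a_i) = 1 for 2 ≤ i ≤ n. Then H^0(G, ℤ_{θ_1}) = 0, H^1(G, ℤ_{θ_1}) ≅ ℤ^{n−2} ⊕ ℤ/2ℤ, and H^2(G, ℤ_{θ_1}) ≅ ℤ/2ℤ. -/

import Mathlib

open scoped TensorProduct

namespace SurfaceNonOr

/-- The single relator `a₁²a₂²⋯aₙ²` of the nonorientable surface group. -/
def rel (n : ℕ) : FreeGroup (Fin n) :=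
  (List.ofFn fun i : Fin n => (FreeGroup.of i) ^ 2).prod

/-- The nonorientable surface group `⟨a₁,…,aₙ ∣ a₁²a₂²⋯aₙ²⟩`. -/
abbrev SurfaceGroup (n : ℕ) := PresentedGroup ({rel n} : Set (FreeGroup (Fin n)))

noncomputable def a {n : ℕ} (i : Fin n) : SurfaceGroup n := PresentedGroup.of i

/-- `r k = a₁²a₂²⋯a_k²`. -/
noncomputable def r {n : ℕ} (k : ℕ) : SurfaceGroup n :=
  ((List.ofFn fun i : Fin n => (a i) ^ 2).take k).prod

/-- The integral group ring `ℤG`. -/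
abbrev A (n : ℕ) := MonoidAlgebra ℤ (SurfaceGroup n)

/-- Inclusion of the group in its group ring. -/
noncomputable def j {n : ℕ} : SurfaceGroup n →* A n := MonoidAlgebra.of ℤ (SurfaceGroup n)

/-- The Fox derivative `∂p/∂aᵢ = r_{i-1}(1 + aᵢ)`. -/
noncomputable def Fa {n : ℕ} (i : Fin n) : A n := j (r i.val) * (1 + j (a i))

abbrev P0 (n : ℕ) := A n
abbrev P1 (n : ℕ) := Fin n → A n
abbrev P2 (n : ℕ) := A n

/-- `d₁ : P₁ → P₀`, `yᵢ ↦ (aᵢ-1)x`. -/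
noncomputable def d1 {n : ℕ} : P1 n →ₗ[A n] P0 n where
  toFun f := ∑ s, f s * (j (a s) - 1)
  map_add' f g := by simp [add_mul, Finset.sum_add_distrib]
  map_smul' r f := by simp [Finset.mul_sum, mul_assoc, smul_eq_mul, mul_add]

/-- `d₂ : P₂ → P₁`, `w ↦ Σᵢ (∂p/∂aᵢ)yᵢ`. -/
noncomputable def d2 {n : ℕ} : P2 n →ₗ[A n] P1 n where
  toFun c := fun s => c * Fa s
  map_add' c c' := by funext s; simp [add_mul]
  map_smul' c c' := by funext s; simp [mul_assoc, smul_eq_mul]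

/-- The augmentation `ε : ℤG → ℤ`. -/
noncomputable def aug {n : ℕ} : A n →ₐ[ℤ] ℤ := MonoidAlgebra.lift ℤ ℤ (SurfaceGroup n) 1

/-- The values of the action `θ₁` (`θ₁(a₁) = -1`, `θ₁(aᵢ) = 1` for `i ≥ 2`) on the generators. -/
def thetaGen {n : ℕ} : Fin n → ℤˣ := fun i => if (i : ℕ) = 0 then -1 else 1

theorem thetaGen_rel (n : ℕ) :
    ∀ r ∈ ({rel n} : Set (FreeGroup (Fin n))), FreeGroup.lift (thetaGen (n := n)) r = 1 := by
  intro r hr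
  rw [Set.mem_singleton_iff] at hr
  subst hr
  rw [rel, map_list_prod]
  apply List.prod_eq_one
  intro x hx
  rw [List.map_ofFn] at hx
  rw [List.mem_ofFn] at hx
  obtain ⟨i, rfl⟩ := hx
  rw [Function.comp_apply, map_pow]
  exact Int.units_sq _

/-- The action `θ₁` (`θ₁(a₁) = -1`, `θ₁(aᵢ) = 1` for `i ≥ 2`) of `G` on `Aut(ℤ) = {±1}`. -/
noncomputable def theta (n : ℕ) : SurfaceGroup n →* ℤˣ :=
  PresentedGroup.toGroup (thetaGen_rel n)

/-- The `ℤG`-module `ℤ_{θ₁}`: the abelian group `ℤ` with `G` acting through `θ₁` (`θ₁(a₁) = -1`, `θ₁(aᵢ) = 1` for `i ≥ 2`). -/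
noncomputable def Ztheta (n : ℕ) : Rep ℤ (SurfaceGroup n) :=
  Rep.of ((DistribMulAction.toModuleEnd ℤ ℤ).comp (theta n))

section Aux

open groupCohomology

/-! ### The twisted product `M ⋊ ℤˣ` -/

@[ext] structure Tw (M : Type) : Type where
  fst : M
  snd : ℤˣ

namespace Tw

variable {M : Type} [AddCommGroup M]

instance : Mul (Tw M) := ⟨fun x y => ⟨x.fst + (x.snd : ℤ) • y.fst, x.snd * y.snd⟩⟩
instance : One (Tw M) := ⟨⟨0, 1⟩⟩
instance : Inv (Tw M) := ⟨fun x => ⟨-((x.snd⁻¹ : ℤˣ) : ℤ) • x.fst, x.snd⁻¹⟩⟩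

lemma mul_def (x y : Tw M) :
    x * y = ⟨x.fst + (x.snd : ℤ) • y.fst, x.snd * y.snd⟩ := rfl

lemma one_def : (1 : Tw M) = ⟨0, 1⟩ := rfl

@[simp] lemma mul_fst (x y : Tw M) : (x * y).fst = x.fst + (x.snd : ℤ) • y.fst := rfl
@[simp] lemma mul_snd (x y : Tw M) : (x * y).snd = x.snd * y.snd := rfl
@[simp] lemma one_fst : (1 : Tw M).fst = 0 := rfl
@[simp] lemma one_snd : (1 : Tw M).snd = 1 := rfl

instance : Group (Tw M) :=
  Group.ofLeftAxioms
    (fun x y z => by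
      cases x; cases y; cases z
      simp [mul_def, Tw.mk.injEq, smul_add, mul_smul, add_assoc, mul_assoc])
    (fun x => by cases x; simp [mul_def, one_def, Tw.mk.injEq])
    (fun x => by
      cases x
      show Tw.mk _ _ * Tw.mk _ _ = _
      simp [mul_def, one_def, Tw.mk.injEq])

@[simp] lemma inv_fst (x : Tw M) : (x⁻¹).fst = -((x.snd⁻¹ : ℤˣ) : ℤ) • x.fst := rfl
@[simp] lemma inv_snd (x : Tw M) : (x⁻¹).snd = x.snd⁻¹ := rfl

/-- Second projection as a hom. -/
def sndHom : Tw M →* ℤˣ where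
  toFun := Tw.snd
  map_one' := rfl
  map_mul' _ _ := rfl

lemma sq (x : Tw M) : x ^ 2 = ⟨x.fst + (x.snd : ℤ) • x.fst, 1⟩ := by
  rw [pow_two, mul_def, Int.units_mul_self]

lemma prod_map_inl (l : List M) :
    (l.map fun m => (⟨m, 1⟩ : Tw M)).prod = ⟨l.sum, 1⟩ := by
  induction l with
  | nil => rfl
  | cons x l ih => simp [mul_def, ih]

end Tw

/-- The Fox-derivative formula for the value of a `Tw M`-valued hom at the relator. -/
lemma fox {M : Type} [AddCommGroup M] {n : ℕ} (h : FreeGroup (Fin n) →* Tw M)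
    (hsnd : ∀ i, (h (FreeGroup.of i)).snd = thetaGen i) :
    (h (rel n)).fst
      = ∑ i : Fin n, ((h (FreeGroup.of i)).fst
          + ((thetaGen i : ℤˣ) : ℤ) • (h (FreeGroup.of i)).fst) := by
  have h1 : h (rel n) = (List.ofFn fun i : Fin n => h (FreeGroup.of i) ^ 2).prod := by
    rw [rel, map_list_prod, List.map_ofFn]
    have he : (⇑h ∘ fun i : Fin n => FreeGroup.of i ^ 2) = fun i : Fin n => h (FreeGroup.of i) ^ 2 := by
      funext i
      simp [map_pow]
    rw [he]
  have h2 : (List.ofFn fun i : Fin n => h (FreeGroup.of i) ^ 2)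
      = (List.ofFn fun i : Fin n =>
          ((h (FreeGroup.of i)).fst + ((thetaGen i : ℤˣ) : ℤ) • (h (FreeGroup.of i)).fst)).map
          (fun m => (⟨m, 1⟩ : Tw M)) := by
    rw [List.map_ofFn]
    have he : ((fun m => (⟨m, 1⟩ : Tw M)) ∘ fun i : Fin n =>
        ((h (FreeGroup.of i)).fst + ((thetaGen i : ℤˣ) : ℤ) • (h (FreeGroup.of i)).fst))
        = fun i : Fin n => h (FreeGroup.of i) ^ 2 := by
      funext i
      rw [Function.comp_apply, Tw.sq, hsnd]
    rw [he]
  rw [h1, h2, Tw.prod_map_inl, List.sum_ofFn]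

/-! ### basic theta facts -/

@[simp] lemma theta_a {n : ℕ} (i : Fin n) : theta n (a i) = thetaGen i :=
  PresentedGroup.toGroup.of _

@[simp] lemma rho_apply {n : ℕ} (g : SurfaceGroup n) (x : ℤ) :
    ((Ztheta n).ρ g) x = ((theta n g : ℤˣ) : ℤ) * x := rfl

lemma thetaGen_zero {m : ℕ} : (thetaGen (0 : Fin (m+2)) : ℤˣ) = -1 := by
  simp [thetaGen]

lemma thetaGen_succ {m : ℕ} (j : Fin (m+1)) : (thetaGen (j.succ) : ℤˣ) = 1 := by
  simp [thetaGen, Fin.val_succ]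

end Aux

/-- The identity, viewing an element of the module `ℤ_θ` as an integer. -/
noncomputable def tv {n : ℕ} (x : Ztheta n) : ℤ := x

theorem H0_subsingleton (m : ℕ) : Subsingleton (groupCohomology (Ztheta (m+2)) 0) := by
  have key : ∀ z : Ztheta (m+2), z ∈ (Ztheta (m+2)).ρ.invariants → tv z = (0 : ℤ) := by
    intro z hz
    have h1 := (Representation.mem_invariants _ _).1 hz (a 0)
    have h2 : ((theta (m+2) (a 0) : ℤˣ) : ℤ) * tv z = tv z := h1
    rw [theta_a, thetaGen_zero] at h2
    simp at h2
    omega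
  have hsub : Subsingleton ((Ztheta (m+2)).ρ.invariants) := by
    constructor
    rintro ⟨x, hx⟩ ⟨y, hy⟩
    exact Subtype.ext ((key x hx).trans (key y hy).symm)
  have e := ((CategoryTheory.forget (ModuleCat ℤ)).mapIso
    (groupCohomology.H0Iso (Ztheta (m+2)))).toEquiv
  exact e.subsingleton_congr.mpr hsub

section H1sec

open groupCohomology

variable {m : ℕ}


@[simp] lemma tv_add {n : ℕ} (x y : Ztheta n) : tv (x + y) = tv x + tv y := rfl
@[simp] lemma tv_zero {n : ℕ} : tv (0 : Ztheta n) = 0 := rfl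
@[simp] lemma tv_rho {n : ℕ} (g : SurfaceGroup n) (x : Ztheta n) :
    tv ((Ztheta n).ρ g x) = ((theta n g : ℤˣ) : ℤ) * tv x := rfl
@[simp] lemma tv_smul {n : ℕ} (z : ℤ) (x : Ztheta n) : tv (z • x) = z * tv x := rfl
@[simp] lemma tv_sub {n : ℕ} (x y : Ztheta n) : tv (x - y) = tv x - tv y := rfl

noncomputable def pmap (m : ℕ) : FreeGroup (Fin (m+2)) →* SurfaceGroup (m+2) :=
  PresentedGroup.mk _

lemma pmap_of (i : Fin (m+2)) : pmap m (FreeGroup.of i) = a i := rfl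

lemma pmap_rel : pmap m (rel (m+2)) = 1 :=
  (QuotientGroup.eq_one_iff _).2 (Subgroup.subset_normalClosure (Set.mem_singleton _))

lemma cocycle_prop (f : cocycles₁ (Ztheta (m+2))) (g h : SurfaceGroup (m+2)) :
    tv (f.1 (g * h)) = ((theta (m+2) g : ℤˣ) : ℤ) * tv (f.1 h) + tv (f.1 g) :=
  (mem_cocycles₁_iff (A := Ztheta (m+2)) f.1).1 f.2 g h

noncomputable def homOfCocycle (f : cocycles₁ (Ztheta (m+2))) :
    SurfaceGroup (m+2) →* Tw ℤ where
  toFun g := ⟨tv (f.1 g), theta (m+2) g⟩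
  map_one' := by
    refine Tw.ext ?_ ?_
    · show tv (f.1 1) = 0
      have h0 : f.1 1 = 0 := cocycles₁_map_one f
      rw [h0]; rfl
    · exact map_one _
  map_mul' g h := by
    refine Tw.ext ?_ ?_
    · show tv (f.1 (g * h)) = tv (f.1 g) + ((theta (m+2) g : ℤˣ) : ℤ) • tv (f.1 h)
      rw [cocycle_prop f g h, smul_eq_mul]; ring
    · exact map_mul _ _ _

@[simp] lemma homOfCocycle_fst (f : cocycles₁ (Ztheta (m+2))) (g : SurfaceGroup (m+2)) :
    (homOfCocycle f g).fst = tv (f.1 g) := rfl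

@[simp] lemma homOfCocycle_snd (f : cocycles₁ (Ztheta (m+2))) (g : SurfaceGroup (m+2)) :
    (homOfCocycle f g).snd = theta (m+2) g := rfl

lemma cocycle_vals (f : cocycles₁ (Ztheta (m+2))) :
    ∑ i : Fin (m+2), (tv (f.1 (a i)) + ((thetaGen i : ℤˣ) : ℤ) • tv (f.1 (a i))) = 0 := by
  have hf := fox ((homOfCocycle f).comp (pmap m)) (fun i => by
    rw [MonoidHom.comp_apply, pmap_of, homOfCocycle_snd, theta_a])
  have h1 : ((homOfCocycle f).comp (pmap m)) (rel (m+2)) = 1 := by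
    rw [MonoidHom.comp_apply, pmap_rel, map_one]
  rw [h1] at hf
  simp only [MonoidHom.comp_apply, pmap_of, homOfCocycle_fst, Tw.one_fst] at hf
  exact hf.symm

lemma cocycle_ext {f g : cocycles₁ (Ztheta (m+2))}
    (h : ∀ i, tv (f.1 (a i)) = tv (g.1 (a i))) : f = g := by
  have hh : homOfCocycle f = homOfCocycle g :=
    PresentedGroup.ext (fun i => Tw.ext (h i) rfl)
  refine Subtype.ext (funext fun x => ?_)
  have h2 : tv (f.1 x) = tv (g.1 x) := congrArg Tw.fst (DFunLike.congr_fun hh x)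
  exact h2

lemma liftTw_rel (φ : Fin (m+2) → ℤ)
    (hφ : ∑ i, (φ i + ((thetaGen i : ℤˣ) : ℤ) • φ i) = 0) :
    ∀ r ∈ ({rel (m+2)} : Set (FreeGroup (Fin (m+2)))),
      FreeGroup.lift (fun i => (⟨φ i, thetaGen i⟩ : Tw ℤ)) r = 1 := by
  rintro r hr
  rw [Set.mem_singleton_iff] at hr
  subst hr
  refine Tw.ext ?_ ?_
  · rw [fox _ (fun i => by rw [FreeGroup.lift_apply_of])]
    show ∑ i : Fin (m+2), _ = (0 : ℤ)
    rw [← hφ]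
    refine Finset.sum_congr rfl (fun i _ => ?_)
    rw [FreeGroup.lift_apply_of]
  · have hsnd : Tw.sndHom.comp (FreeGroup.lift (fun i => (⟨φ i, thetaGen i⟩ : Tw ℤ)))
        = FreeGroup.lift (thetaGen (n := m+2)) := by
      refine FreeGroup.ext_hom _ _ (fun i => ?_)
      rw [MonoidHom.comp_apply, FreeGroup.lift_apply_of, FreeGroup.lift_apply_of]
      rfl
    have h2 := DFunLike.congr_fun hsnd (rel (m+2))
    rw [MonoidHom.comp_apply] at h2
    show Tw.sndHom _ = (1 : ℤˣ)
    rw [h2, thetaGen_rel (m+2) _ (Set.mem_singleton _)]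

noncomputable def homOfVals (φ : Fin (m+2) → ℤ)
    (hφ : ∑ i, (φ i + ((thetaGen i : ℤˣ) : ℤ) • φ i) = 0) :
    SurfaceGroup (m+2) →* Tw ℤ :=
  PresentedGroup.toGroup (liftTw_rel φ hφ)

lemma homOfVals_of (φ : Fin (m+2) → ℤ)
    (hφ : ∑ i, (φ i + ((thetaGen i : ℤˣ) : ℤ) • φ i) = 0) (i : Fin (m+2)) :
    homOfVals φ hφ (a i) = ⟨φ i, thetaGen i⟩ :=
  PresentedGroup.toGroup.of _

lemma homOfVals_snd (φ : Fin (m+2) → ℤ)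
    (hφ : ∑ i, (φ i + ((thetaGen i : ℤˣ) : ℤ) • φ i) = 0) (g : SurfaceGroup (m+2)) :
    (homOfVals φ hφ g).snd = theta (m+2) g := by
  have hh : Tw.sndHom.comp (homOfVals φ hφ) = theta (m+2) := by
    refine PresentedGroup.ext (fun i => ?_)
    rw [MonoidHom.comp_apply]
    show (homOfVals φ hφ (a i)).snd = theta (m+2) (a i)
    rw [homOfVals_of, theta_a]
  exact DFunLike.congr_fun hh g

noncomputable def cocycleOfVals (φ : Fin (m+2) → ℤ)
    (hφ : ∑ i, (φ i + ((thetaGen i : ℤˣ) : ℤ) • φ i) = 0) :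
    cocycles₁ (Ztheta (m+2)) :=
  ⟨fun g => ((homOfVals φ hφ g).fst : ℤ), by
    refine (mem_cocycles₁_iff (A := Ztheta (m+2)) _).2 ?_
    intro g h
    show (homOfVals φ hφ (g * h)).fst
      = ((theta (m+2) g : ℤˣ) : ℤ) * (homOfVals φ hφ h).fst + (homOfVals φ hφ g).fst
    rw [map_mul, Tw.mul_fst, homOfVals_snd, smul_eq_mul]
    ring⟩

lemma cocycleOfVals_a (φ : Fin (m+2) → ℤ)
    (hφ : ∑ i, (φ i + ((thetaGen i : ℤˣ) : ℤ) • φ i) = 0) (i : Fin (m+2)) :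
    tv ((cocycleOfVals φ hφ).1 (a i)) = φ i := by
  show (homOfVals φ hφ (a i)).fst = φ i
  rw [homOfVals_of]

noncomputable def Phi (m : ℕ) :
    cocycles₁ (Ztheta (m+2)) →ₗ[ℤ] ((Fin m → ℤ) × ZMod 2) where
  toFun f := (fun k => tv (f.1 (a (k.castSucc.succ))), ((tv (f.1 (a 0)) : ℤ) : ZMod 2))
  map_add' f g := by
    have hfst : ∀ x : SurfaceGroup (m+2), tv ((f + g).1 x) = tv (f.1 x) + tv (g.1 x) :=
      fun x => rfl
    refine Prod.ext (funext fun k => hfst _) ?_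
    show ((tv ((f + g).1 (a 0)) : ℤ) : ZMod 2)
      = ((tv (f.1 (a 0)) : ℤ) : ZMod 2) + ((tv (g.1 (a 0)) : ℤ) : ZMod 2)
    rw [hfst, Int.cast_add]
  map_smul' z f := by
    have hfst : ∀ x : SurfaceGroup (m+2), tv ((z • f).1 x) = z * tv (f.1 x) := fun x => rfl
    refine Prod.ext (funext fun k => ?_) ?_
    · show tv ((z • f).1 (a (k.castSucc.succ))) = z • tv (f.1 (a (k.castSucc.succ)))
      rw [hfst, smul_eq_mul]
    · show ((tv ((z • f).1 (a 0)) : ℤ) : ZMod 2) = z • ((tv (f.1 (a 0)) : ℤ) : ZMod 2)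
      rw [hfst, Int.cast_mul, zsmul_eq_mul]

lemma Phi_surj (m : ℕ) : Function.Surjective (Phi m) := by
  rintro ⟨v, c⟩
  set φ : Fin (m+2) → ℤ := Fin.cases (c.val : ℤ)
    (fun j : Fin (m+1) => Fin.lastCases (-(∑ k, v k)) (fun k : Fin m => v k) j) with hφdef
  have hφ0 : φ 0 = (c.val : ℤ) := by simp [hφdef]
  have hφsucc : ∀ j : Fin (m+1),
      φ j.succ = Fin.lastCases (-(∑ k, v k)) (fun k : Fin m => v k) j := fun j => by
    simp [hφdef]
  have hsum : ∑ i, (φ i + ((thetaGen i : ℤˣ) : ℤ) • φ i) = 0 := by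
    rw [Fin.sum_univ_succ]
    have h0 : φ (0 : Fin (m+2)) + ((thetaGen (0 : Fin (m+2)) : ℤˣ) : ℤ) • φ 0 = 0 := by
      rw [thetaGen_zero]; simp
    rw [h0, zero_add]
    have hs : ∀ j : Fin (m+1),
        φ j.succ + ((thetaGen j.succ : ℤˣ) : ℤ) • φ j.succ = 2 * φ j.succ := by
      intro j; rw [thetaGen_succ]; simp; ring
    rw [Finset.sum_congr rfl (fun j _ => hs j), ← Finset.mul_sum]
    have hz : ∑ j : Fin (m+1), φ j.succ = 0 := by
      rw [Finset.sum_congr rfl (fun j _ => hφsucc j), Fin.sum_univ_castSucc]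
      simp
    rw [hz, mul_zero]
  refine ⟨cocycleOfVals φ hsum, ?_⟩
  refine Prod.ext (funext fun k => ?_) ?_
  · show tv ((cocycleOfVals φ hsum).1 (a (k.castSucc.succ))) = v k
    rw [cocycleOfVals_a, hφsucc k.castSucc]
    simp
  · show ((tv ((cocycleOfVals φ hsum).1 (a 0)) : ℤ) : ZMod 2) = c
    rw [cocycleOfVals_a, hφ0, Int.cast_natCast]
    exact ZMod.natCast_rightInverse c

lemma Phi_ker (m : ℕ) : LinearMap.ker (Phi m)
    = (coboundaries₁ (Ztheta (m+2))).comap (cocycles₁ (Ztheta (m+2))).subtype := by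
  ext f
  rw [LinearMap.mem_ker]
  constructor
  · intro hf
    have h1 : ∀ k : Fin m, tv (f.1 (a (k.castSucc.succ))) = 0 :=
      fun k => congrFun (congrArg Prod.fst hf) k
    have h2 : ((tv (f.1 (a 0)) : ℤ) : ZMod 2) = 0 := congrArg Prod.snd hf
    obtain ⟨t, ht⟩ : (2 : ℤ) ∣ tv (f.1 (a 0)) := by
      have := (ZMod.intCast_zmod_eq_zero_iff_dvd (tv (f.1 (a 0))) 2).1 h2
      exact_mod_cast this
    have hvals := cocycle_vals f
    rw [Fin.sum_univ_succ] at hvals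
    have h0 : (tv (f.1 (a (0 : Fin (m+2))))
        + ((thetaGen (0 : Fin (m+2)) : ℤˣ) : ℤ) • tv (f.1 (a 0))) = 0 := by
      rw [thetaGen_zero]; simp
    rw [h0, zero_add] at hvals
    have hsucc : ∀ j : Fin (m+1), (tv (f.1 (a j.succ))
        + ((thetaGen j.succ : ℤˣ) : ℤ) • tv (f.1 (a j.succ))) = 2 * tv (f.1 (a j.succ)) := by
      intro j; rw [thetaGen_succ]; simp; ring
    rw [Finset.sum_congr rfl (fun j _ => hsucc j), ← Finset.mul_sum,
      Fin.sum_univ_castSucc] at hvals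
    rw [Finset.sum_congr rfl (fun k _ => h1 k), Finset.sum_const_zero, zero_add] at hvals
    have hlast : tv (f.1 (a ((Fin.last m).succ))) = 0 := by omega
    have hall : ∀ j : Fin (m+1), tv (f.1 (a j.succ)) = 0 := by
      intro j
      refine Fin.lastCases ?_ ?_ j
      · exact hlast
      · exact h1
    have hmem : d₀₁ (Ztheta (m+2)) (-t : ℤ) ∈ cocycles₁ (Ztheta (m+2)) :=
      d₀₁_apply_mem_cocycles₁ (A := Ztheta (m+2)) (-t : ℤ)
    have hfd : f = ⟨d₀₁ (Ztheta (m+2)) (-t : ℤ), hmem⟩ := by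
      refine cocycle_ext (fun i => ?_)
      have hdz : ∀ g : SurfaceGroup (m+2),
          tv ((⟨d₀₁ (Ztheta (m+2)) (-t : ℤ), hmem⟩ : cocycles₁ (Ztheta (m+2))).1 g)
            = ((theta (m+2) g : ℤˣ) : ℤ) * (-t) - (-t) := fun g => rfl
      refine Fin.cases ?_ ?_ i
      · rw [hdz, theta_a, thetaGen_zero, ht]
        simp
        ring
      · intro j
        rw [hdz, theta_a, thetaGen_succ, hall j]
        simp
    rw [hfd]
    exact Submodule.mem_comap.2 ⟨(-t : ℤ), rfl⟩
  · intro hf'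
    obtain ⟨x, hx⟩ : ∃ x : Ztheta (m+2), (d₀₁ (Ztheta (m+2))).hom x = f.1 :=
      Submodule.mem_comap.1 hf'
    have hdz : ∀ g : SurfaceGroup (m+2),
        tv (f.1 g)
          = ((theta (m+2) g : ℤˣ) : ℤ) * tv x - tv x := fun g => by
      have h := congrFun hx g
      change _ = f.1 g at h
      rw [← h]; rfl
    refine Prod.ext (funext fun k => ?_) ?_
    · show tv (f.1 (a (k.castSucc.succ))) = 0
      rw [hdz, theta_a, thetaGen_succ]
      simp
    · show ((tv (f.1 (a 0)) : ℤ) : ZMod 2) = 0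
      rw [hdz, theta_a, thetaGen_zero]
      have he : ((-1 : ℤˣ) : ℤ) * tv x - tv x = -2 * tv x := by simp; ring
      rw [he]
      have hcalc : ((-2 * tv x : ℤ) : ZMod 2) = (-2 : ZMod 2) * ((tv x : ℤ) : ZMod 2) := by
        push_cast
        ring
      rw [hcalc]
      have h22 : (-2 : ZMod 2) = 0 := by decide
      rw [h22, zero_mul]

noncomputable def H1equiv (m : ℕ) :
    groupCohomology (Ztheta (m+2)) 1 ≃+ ((Fin m → ℤ) × ZMod 2) := by
  have hs : Function.Surjective (H1π (Ztheta (m+2))).hom :=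
    (ModuleCat.epi_iff_surjective _).1 inferInstance
  have e1 := (QuotientAddGroup.quotientKerEquivOfSurjective
    (H1π (Ztheta (m+2))).hom.toAddMonoidHom hs).symm
  have e2 := QuotientAddGroup.quotientAddEquivOfEq
    (show (H1π (Ztheta (m+2))).hom.toAddMonoidHom.ker = (Phi m).toAddMonoidHom.ker by
      ext x
      change (H1π (Ztheta (m+2))) x = 0 ↔ x ∈ LinearMap.ker (Phi m)
      have hk := Phi_ker m
      exact (H1π_eq_zero_iff x).trans (Iff.of_eq (congrArg (fun S => x ∈ S) hk.symm)))
  have e3 := QuotientAddGroup.quotientKerEquivOfSurjective (Phi m).toAddMonoidHom (Phi_surj m)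
  exact e1.trans (e2.trans e3)

end H1sec

section H2A

open groupCohomology

variable {m : ℕ}

lemma theta_sq {n : ℕ} (g : SurfaceGroup n) :
    ((theta n g : ℤˣ) : ℤ) * ((theta n g : ℤˣ) : ℤ) = 1 := by
  rw [← Units.val_mul, Int.units_mul_self]
  rfl

lemma theta_inv {n : ℕ} (g : SurfaceGroup n) :
    ((theta n g⁻¹ : ℤˣ) : ℤ) = ((theta n g : ℤˣ) : ℤ) := by
  rw [map_inv]
  rcases Int.units_eq_one_or (theta n g) with h | h <;> rw [h] <;> rfl

/-- Generic even-sum lemma for Fox sums. -/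
lemma sum_even (x : Fin (m+2) → ℤ) :
    ∑ i, (x i + ((thetaGen i : ℤˣ) : ℤ) • x i) = 2 * ∑ j : Fin (m+1), x j.succ := by
  rw [Fin.sum_univ_succ]
  have h0 : x 0 + ((thetaGen (0 : Fin (m+2)) : ℤˣ) : ℤ) • x 0 = 0 := by
    rw [thetaGen_zero]; simp
  rw [h0, zero_add, Finset.mul_sum]
  refine Finset.sum_congr rfl (fun j _ => ?_)
  rw [thetaGen_succ]; simp; ring

/-- Values of the detecting homomorphism into `ℚ ⋊ ℤˣ`. -/
noncomputable def bQ (m : ℕ) : Fin (m+2) → Tw ℚ := fun i =>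
  if i.1 = 0 then ⟨0, -1⟩ else if i.1 = 1 then ⟨1/2, 1⟩ else ⟨0, 1⟩

lemma bQ_snd (i : Fin (m+2)) : (bQ m i).snd = thetaGen i := by
  unfold bQ thetaGen
  by_cases h : (i : ℕ) = 0
  · simp [h]
  · by_cases h2 : (i : ℕ) = 1 <;> simp [h, h2]

lemma bQ_fst_zero : (bQ m 0).fst = 0 := by unfold bQ; simp
lemma bQ_fst_one : (bQ m ((0 : Fin (m+1)).succ)).fst = 1/2 := by
  unfold bQ
  have h1 : (((0 : Fin (m+1)).succ : Fin (m+2)) : ℕ) = 1 := rfl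
  rw [h1]
  norm_num
lemma bQ_fst_succ_succ (k : Fin m) : (bQ m (k.succ.succ)).fst = 0 := by
  unfold bQ
  have h1 : ((k.succ.succ : Fin (m+2)) : ℕ) = k.1 + 2 := rfl
  rw [h1]
  rw [if_neg (by omega), if_neg (by omega)]

noncomputable def rhoQ (m : ℕ) : FreeGroup (Fin (m+2)) →* Tw ℚ := FreeGroup.lift (bQ m)

@[simp] lemma rhoQ_of (i : Fin (m+2)) : rhoQ m (FreeGroup.of i) = bQ m i := FreeGroup.lift_apply_of

lemma rhoQ_snd (w : FreeGroup (Fin (m+2))) :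
    (rhoQ m w).snd = theta (m+2) (pmap m w) := by
  have hh : Tw.sndHom.comp (rhoQ m) = (theta (m+2)).comp (pmap m) := by
    refine FreeGroup.ext_hom _ _ (fun i => ?_)
    show (rhoQ m (FreeGroup.of i)).snd = theta (m+2) (pmap m (FreeGroup.of i))
    rw [rhoQ_of, bQ_snd, pmap_of, theta_a]
  exact DFunLike.congr_fun hh w

noncomputable def nu (w : FreeGroup (Fin (m+2))) : ℚ := (rhoQ m w).fst

lemma nu_mul (w v : FreeGroup (Fin (m+2))) :
    nu (w * v) = nu w + ((theta (m+2) (pmap m w) : ℤˣ) : ℤ) * nu v := by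
  show (rhoQ m (w * v)).fst = _
  rw [map_mul, Tw.mul_fst, rhoQ_snd]
  rw [zsmul_eq_mul]
  push_cast
  rfl

lemma nu_inv (w : FreeGroup (Fin (m+2))) :
    nu (w⁻¹) = -(((theta (m+2) (pmap m w) : ℤˣ) : ℤ) * nu w) := by
  show (rhoQ m w⁻¹).fst = _
  rw [map_inv, Tw.inv_fst, rhoQ_snd, zsmul_eq_mul]
  have : (((theta (m+2) (pmap m w))⁻¹ : ℤˣ) : ℤ) = ((theta (m+2) (pmap m w) : ℤˣ) : ℤ) := by
    rcases Int.units_eq_one_or (theta (m+2) (pmap m w)) with h | h <;> rw [h] <;> rfl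
  rw [this]
  push_cast
  ring_nf
  rfl

/-- The subgroup of `ℚ ⋊ ℤˣ` of integer translations. -/
noncomputable def LZ : Subgroup (Tw ℚ) where
  carrier := {x | x.snd = 1 ∧ ∃ z : ℤ, (z : ℚ) = x.fst}
  one_mem' := ⟨rfl, ⟨0, by simp⟩⟩
  mul_mem' := by
    rintro x y ⟨hx1, zx, hx2⟩ ⟨hy1, zy, hy2⟩
    refine ⟨by rw [Tw.mul_snd, hx1, hy1, one_mul], ⟨zx + zy, ?_⟩⟩
    rw [Tw.mul_fst, hx1, ← hx2, ← hy2]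
    norm_num
  inv_mem' := by
    rintro x ⟨hx1, zx, hx2⟩
    refine ⟨by rw [Tw.inv_snd, hx1, inv_one], ⟨-zx, ?_⟩⟩
    rw [Tw.inv_fst, hx1, inv_one, ← hx2]
    norm_num

lemma Tw_conj {M : Type} [AddCommGroup M] (g x : Tw M) (hx : x.snd = 1) :
    g * x * g⁻¹ = ⟨(g.snd : ℤ) • x.fst, 1⟩ := by
  refine Tw.ext ?_ ?_
  · rw [Tw.mul_fst, Tw.mul_fst, Tw.mul_snd, Tw.inv_fst, hx, mul_one, smul_smul]
    have h2 : ((g.snd : ℤˣ) : ℤ) * ((g.snd⁻¹ : ℤˣ) : ℤ) = 1 := by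
      rw [← Units.val_mul, mul_inv_cancel]; rfl
    have hc : ((g.snd : ℤˣ) : ℤ) * (-((g.snd⁻¹ : ℤˣ) : ℤ)) = -1 := by
      rw [mul_neg, h2]
    rw [hc, neg_one_smul]
    abel
  · rw [Tw.mul_snd, Tw.mul_snd, Tw.inv_snd, hx, mul_one, mul_inv_cancel]

instance : LZ.Normal := by
  constructor
  rintro x ⟨hx1, z, hz⟩ g
  rw [Tw_conj g x hx1]
  refine ⟨rfl, ⟨(g.snd : ℤ) * z, ?_⟩⟩
  show _ = (g.snd : ℤ) • x.fst
  rw [zsmul_eq_mul, ← hz]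
  push_cast
  ring

lemma rhoQ_rel : rhoQ m (rel (m+2)) = ⟨1, 1⟩ := by
  refine Tw.ext ?_ ?_
  · rw [fox (rhoQ m) (fun i => by rw [rhoQ_of, bQ_snd])]
    show (∑ i : Fin (m+2), ((rhoQ m (FreeGroup.of i)).fst
      + ((thetaGen i : ℤˣ) : ℤ) • (rhoQ m (FreeGroup.of i)).fst)) = 1
    rw [Fin.sum_univ_succ]
    have h0 : ((rhoQ m (FreeGroup.of (0 : Fin (m+2)))).fst
        + ((thetaGen (0 : Fin (m+2)) : ℤˣ) : ℤ) • (rhoQ m (FreeGroup.of 0)).fst) = 0 := by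
      rw [rhoQ_of, bQ_fst_zero]
      simp
    rw [h0, zero_add, Fin.sum_univ_succ]
    have h1 : ((rhoQ m (FreeGroup.of ((0 : Fin (m+1)).succ))).fst
        + ((thetaGen ((0 : Fin (m+1)).succ) : ℤˣ) : ℤ)
          • (rhoQ m (FreeGroup.of ((0 : Fin (m+1)).succ))).fst) = 1 := by
      rw [rhoQ_of, bQ_fst_one, thetaGen_succ]
      norm_num
    rw [h1]
    have h2 : ∀ k : Fin m, ((rhoQ m (FreeGroup.of (k.succ.succ))).fst
        + ((thetaGen (k.succ.succ) : ℤˣ) : ℤ) • (rhoQ m (FreeGroup.of (k.succ.succ))).fst)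
          = 0 := by
      intro k
      rw [rhoQ_of, bQ_fst_succ_succ]
      simp
    rw [Finset.sum_congr rfl (fun k _ => h2 k), Finset.sum_const_zero]
    norm_num
  · show (rhoQ m (rel (m+2))).snd = 1
    rw [rhoQ_snd, pmap_rel, map_one]

lemma mem_LZ_of_pmap_one {w : FreeGroup (Fin (m+2))} (hw : pmap m w = 1) :
    rhoQ m w ∈ LZ := by
  have hle : Subgroup.normalClosure ({rel (m+2)} : Set (FreeGroup (Fin (m+2))))
      ≤ LZ.comap (rhoQ m) := by
    haveI : (LZ.comap (rhoQ m)).Normal := Subgroup.Normal.comap inferInstance _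
    refine Subgroup.normalClosure_le_normal ?_
    rintro r hr
    rw [Set.mem_singleton_iff] at hr
    subst hr
    show rhoQ m (rel (m+2)) ∈ LZ
    rw [rhoQ_rel]
    exact ⟨rfl, ⟨1, by norm_num⟩⟩
  exact hle ((QuotientGroup.eq_one_iff w).1 hw)

noncomputable def phiZ (w : FreeGroup (Fin (m+2))) : ℤ := (nu (m := m) w).num

lemma phi_spec {w : FreeGroup (Fin (m+2))} (hw : pmap m w = 1) :
    ((phiZ w : ℚ)) = nu w := by
  obtain ⟨h1, z, hz⟩ := mem_LZ_of_pmap_one hw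
  have : nu w = (z : ℚ) := hz.symm
  rw [phiZ, this, Rat.num_intCast]

end H2A

section H2B

open groupCohomology

variable {m : ℕ}

noncomputable def sec (g : SurfaceGroup (m+2)) : FreeGroup (Fin (m+2)) := Quotient.out g

lemma pmap_sec (g : SurfaceGroup (m+2)) : pmap m (sec g) = g := Quotient.out_eq g

noncomputable def c0 (g h : SurfaceGroup (m+2)) : FreeGroup (Fin (m+2)) :=
  sec g * sec h * (sec (g * h))⁻¹

lemma pmap_c0 (g h : SurfaceGroup (m+2)) : pmap m (c0 g h) = 1 := by
  rw [c0, map_mul, map_mul, map_inv, pmap_sec, pmap_sec, pmap_sec, mul_inv_cancel]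

/-- The detecting 2-cocycle. -/
noncomputable def sigma0 (m : ℕ) : SurfaceGroup (m+2) × SurfaceGroup (m+2) → ℤ :=
  fun p => phiZ (c0 p.1 p.2)

lemma nu_c0 (g h : SurfaceGroup (m+2)) :
    ((sigma0 m (g, h) : ℤ) : ℚ)
      = nu (sec g) + ((theta (m+2) g : ℤˣ) : ℤ) * nu (sec h) - nu (sec (g * h)) := by
  show ((phiZ (c0 g h) : ℤ) : ℚ) = _
  rw [phi_spec (pmap_c0 g h), c0, nu_mul, nu_mul, nu_inv]
  rw [map_mul, pmap_sec, pmap_sec, pmap_sec]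
  have hsqq : (((theta (m+2) (g*h) : ℤˣ) : ℤ) : ℚ) * (((theta (m+2) (g*h) : ℤˣ) : ℤ) : ℚ)
      = 1 := by exact_mod_cast theta_sq (g*h)
  push_cast
  linear_combination (-(nu (sec (g*h)))) * hsqq

lemma sigma0_mem : sigma0 m ∈ cocycles₂ (Ztheta (m+2)) := by
  refine (mem_cocycles₂_iff (A := Ztheta (m+2)) _).2 ?_
  intro g h j
  show sigma0 m (g * h, j) + sigma0 m (g, h)
    = ((theta (m+2) g : ℤˣ) : ℤ) * sigma0 m (h, j) + sigma0 m (g, h * j)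
  have hcast : ∀ x y : ℤ, ((x : ℚ) = y) → x = y := fun x y hh => by exact_mod_cast hh
  apply hcast
  push_cast
  rw [nu_c0, nu_c0, nu_c0, nu_c0]
  rw [mul_assoc]
  have hθ : ((theta (m+2) (g * h) : ℤˣ) : ℤ)
      = ((theta (m+2) g : ℤˣ) : ℤ) * ((theta (m+2) h : ℤˣ) : ℤ) := by
    rw [map_mul, Units.val_mul]
  push_cast [hθ]
  ring

/-- `σ₀` is not a coboundary. -/
lemma sigma0_not_cob : ¬ ∃ x : SurfaceGroup (m+2) → ℤ, ∀ g h : SurfaceGroup (m+2),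
    ((theta (m+2) g : ℤˣ) : ℤ) * x h - x (g * h) + x g = sigma0 m (g, h) := by
  rintro ⟨x, hx⟩
  -- the 1-cocycle η on G with values in ℚ
  set η : SurfaceGroup (m+2) → ℚ := fun g => (x g : ℚ) - nu (sec g) with hηdef
  have hη1 : η 1 = 0 := by
    have h1 := hx 1 1
    rw [map_one, mul_one] at h1
    have hx1 : (x 1 : ℤ) = sigma0 m (1, 1) := by
      have : ((1 : ℤˣ) : ℤ) * x 1 - x 1 + x 1 = sigma0 m (1, 1) := h1
      simpa using this
    have hc011 : (sigma0 m ((1 : SurfaceGroup (m+2)), 1) : ℚ)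
        = nu (sec (1 : SurfaceGroup (m+2))) := by
      have h2 := nu_c0 (1 : SurfaceGroup (m+2)) 1
      rw [one_mul, map_one] at h2
      simpa using h2
    rw [hηdef]
    show (x 1 : ℚ) - nu (sec 1) = 0
    rw [hx1, hc011]
    ring
  have hηmul : ∀ g h : SurfaceGroup (m+2),
      η (g * h) = η g + ((theta (m+2) g : ℤˣ) : ℤ) * η h := by
    intro g h
    have h1 := hx g h
    have h2 := nu_c0 g h
    show (x (g*h) : ℚ) - nu (sec (g*h)) = ((x g : ℚ) - nu (sec g))
      + ((theta (m+2) g : ℤˣ) : ℤ) * ((x h : ℚ) - nu (sec h))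
    have h1' : ((theta (m+2) g : ℤˣ) : ℤ) * x h - x (g * h) + x g = sigma0 m (g, h) := h1
    have h1q : (((theta (m+2) g : ℤˣ) : ℤ) : ℚ) * (x h : ℚ) - (x (g*h) : ℚ) + (x g : ℚ)
        = (sigma0 m (g, h) : ℚ) := by exact_mod_cast congrArg (fun z : ℤ => (z : ℚ)) h1'
    rw [h2] at h1q
    linarith [h1q]
  -- the hom G →* Tw ℚ
  set Hη : SurfaceGroup (m+2) →* Tw ℚ :=
    { toFun := fun g => ⟨η g, theta (m+2) g⟩
      map_one' := by
        refine Tw.ext ?_ ?_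
        · exact hη1
        · exact map_one _
      map_mul' := fun g h => by
        refine Tw.ext ?_ ?_
        · show η (g * h) = η g + ((theta (m+2) g : ℤˣ) : ℤ) • η h
          rw [hηmul g h, zsmul_eq_mul]
          try push_cast
          try ring
        · exact map_mul _ _ _ } with hHdef
  have hfox := fox (Hη.comp (pmap m)) (fun i => by
    show (Hη (pmap m (FreeGroup.of i))).snd = thetaGen i
    rw [pmap_of]
    show theta (m+2) (a i) = thetaGen i
    exact theta_a i)
  have hrel1 : (Hη.comp (pmap m)) (rel (m+2)) = 1 := by
    rw [MonoidHom.comp_apply, pmap_rel, map_one]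
  rw [hrel1] at hfox
  have hHfst : ∀ g : SurfaceGroup (m+2), (Hη g).fst = η g := fun g => rfl
  simp only [MonoidHom.comp_apply, pmap_of, hHfst, Tw.one_fst] at hfox
  have hfox' : (0 : ℚ) = ∑ i : Fin (m+2), (η (a i) + ((thetaGen i : ℤˣ) : ℤ) • η (a i)) := hfox
  -- sum over the tail is zero
  have hsum : ∑ j : Fin (m+1), η (a j.succ) = 0 := by
    have h2 : ∑ i : Fin (m+2), (η (a i) + ((thetaGen i : ℤˣ) : ℤ) • η (a i))
        = 2 * ∑ j : Fin (m+1), η (a j.succ) := by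
      rw [Fin.sum_univ_succ]
      have h0 : η (a 0) + ((thetaGen (0 : Fin (m+2)) : ℤˣ) : ℤ) • η (a 0) = 0 := by
        rw [thetaGen_zero]
        simp
      rw [h0, zero_add, Finset.mul_sum]
      refine Finset.sum_congr rfl (fun j _ => ?_)
      rw [thetaGen_succ]
      simp
      ring
    rw [h2] at hfox'
    linarith [hfox'.symm]
  -- decompose η (a i) = x (a i) - ν(of i) - θ_i * (integer)
  set y : Fin (m+2) → FreeGroup (Fin (m+2)) := fun i => (FreeGroup.of i)⁻¹ * sec (a i) with hydef
  have hy : ∀ i, pmap m (y i) = 1 := by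
    intro i
    rw [hydef]
    show pmap m ((FreeGroup.of i)⁻¹ * sec (a i)) = 1
    rw [map_mul, map_inv, pmap_of, pmap_sec, inv_mul_cancel]
  have hnusec : ∀ i : Fin (m+2), nu (sec (a i)) = nu (FreeGroup.of i)
      + ((thetaGen i : ℤˣ) : ℤ) * (phiZ (y i) : ℚ) := by
    intro i
    have : sec (a i) = FreeGroup.of i * y i := by
      rw [hydef]
      group
    rw [this, nu_mul, pmap_of, theta_a, phi_spec (hy i)]
  -- all tail generators: ν(of j.succ) value
  have hνof : ∀ j : Fin (m+1), nu (FreeGroup.of (j.succ : Fin (m+2)))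
      = (bQ m j.succ).fst := fun j => by rw [nu]; rw [rhoQ_of]
  -- key: the sum of the tail of ν(of ·) is 1/2
  have hνsum : ∑ j : Fin (m+1), nu (FreeGroup.of (j.succ : Fin (m+2))) = 1/2 := by
    rw [Finset.sum_congr rfl (fun j _ => hνof j), Fin.sum_univ_succ]
    rw [bQ_fst_one]
    have h2 : ∀ k : Fin m, (bQ m (k.succ.succ)).fst = 0 := bQ_fst_succ_succ
    rw [Finset.sum_congr rfl (fun k _ => h2 k), Finset.sum_const_zero]
    norm_num
  -- now assemble the contradiction
  set K : ℤ := ∑ j : Fin (m+1), (x (a j.succ) - ((thetaGen (j.succ : Fin (m+2)) : ℤˣ) : ℤ) * phiZ (y j.succ)) with hKdef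
  have hKQ : (K : ℚ) = 1/2 := by
    have hterm : ∀ j : Fin (m+1), η (a j.succ)
        = ((x (a j.succ) - ((thetaGen (j.succ : Fin (m+2)) : ℤˣ) : ℤ) * phiZ (y j.succ) : ℤ) : ℚ)
          - nu (FreeGroup.of (j.succ : Fin (m+2))) := by
      intro j
      show (x (a j.succ) : ℚ) - nu (sec (a j.succ)) = _
      rw [hnusec j.succ]
      push_cast
      ring
    have := hsum
    rw [Finset.sum_congr rfl (fun j _ => hterm j)] at this
    rw [Finset.sum_sub_distrib, hνsum] at this
    rw [hKdef]
    push_cast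
    push_cast at this
    linarith [this]
  have : (2 * K : ℤ) = 1 := by
    have h2 : ((2 * K : ℤ) : ℚ) = 1 := by push_cast; linarith [hKQ]
    exact_mod_cast h2
  omega

end H2B

section H2C

open groupCohomology

variable {m : ℕ}

def IsNC (m : ℕ) (σ : SurfaceGroup (m+2) × SurfaceGroup (m+2) → ℤ) : Prop :=
  σ ∈ cocycles₂ (Ztheta (m+2)) ∧ σ (1, 1) = 0

variable {σ σ1 σ2 : SurfaceGroup (m+2) × SurfaceGroup (m+2) → ℤ}

lemma nc_id (hσ : IsNC m σ) (g h j : SurfaceGroup (m+2)) :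
    σ (g * h, j) + σ (g, h) = ((theta (m+2) g : ℤˣ) : ℤ) * σ (h, j) + σ (g, h * j) :=
  (mem_cocycles₂_iff (A := Ztheta (m+2)) σ).1 hσ.1 g h j

lemma nc_one_fst (hσ : IsNC m σ) (g : SurfaceGroup (m+2)) : σ (1, g) = 0 := by
  have h : σ (1, g) = σ (1, 1) :=
    cocycles₂_map_one_fst (A := Ztheta (m+2)) ⟨σ, hσ.1⟩ g
  rw [h, hσ.2]

lemma nc_one_snd (hσ : IsNC m σ) (g : SurfaceGroup (m+2)) : σ (g, 1) = 0 := by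
  have h : σ (g, 1) = ((theta (m+2) g : ℤˣ) : ℤ) * σ (1, 1) :=
    cocycles₂_map_one_snd (A := Ztheta (m+2)) ⟨σ, hσ.1⟩ g
  rw [h, hσ.2, mul_zero]

lemma nc_inv (hσ : IsNC m σ) (g : SurfaceGroup (m+2)) :
    σ (g, g⁻¹) = ((theta (m+2) g : ℤˣ) : ℤ) * σ (g⁻¹, g) := by
  have h : ((theta (m+2) g : ℤˣ) : ℤ) * σ (g⁻¹, g) - σ (g, g⁻¹) = σ (1, 1) - σ (g, 1) :=
    cocycles₂_ρ_map_inv_sub_map_inv (A := Ztheta (m+2)) ⟨σ, hσ.1⟩ g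
  rw [hσ.2, nc_one_snd hσ g] at h
  omega

/-- The extension of `G` by `ℤ_θ` determined by a normalized `2`-cocycle `σ`. -/
@[ext] structure Esp {m : ℕ} (σ : SurfaceGroup (m+2) × SurfaceGroup (m+2) → ℤ) : Type where
  fst : ℤ
  snd : SurfaceGroup (m+2)

noncomputable def espMul (x y : Esp σ) : Esp σ :=
  ⟨x.fst + ((theta (m+2) x.snd : ℤˣ) : ℤ) * y.fst + σ (x.snd, y.snd), x.snd * y.snd⟩

noncomputable def espOne : Esp σ := ⟨0, 1⟩

noncomputable def espInv (x : Esp σ) : Esp σ :=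
  ⟨-(((theta (m+2) x.snd : ℤˣ) : ℤ) * x.fst) - σ (x.snd⁻¹, x.snd), x.snd⁻¹⟩

noncomputable def espGroup (hσ : IsNC m σ) : Group (Esp σ) :=
  letI : Mul (Esp σ) := ⟨espMul⟩
  letI : One (Esp σ) := ⟨espOne⟩
  letI : Inv (Esp σ) := ⟨espInv⟩
  Group.ofLeftAxioms
    (fun x y z => by
      refine Esp.ext ?_ ?_
      · show (x.fst + ((theta (m+2) x.snd : ℤˣ) : ℤ) * y.fst + σ (x.snd, y.snd))
            + ((theta (m+2) (x.snd * y.snd) : ℤˣ) : ℤ) * z.fst + σ (x.snd * y.snd, z.snd)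
          = x.fst + ((theta (m+2) x.snd : ℤˣ) : ℤ)
              * (y.fst + ((theta (m+2) y.snd : ℤˣ) : ℤ) * z.fst + σ (y.snd, z.snd))
            + σ (x.snd, y.snd * z.snd)
        have hm : ((theta (m+2) (x.snd * y.snd) : ℤˣ) : ℤ)
            = ((theta (m+2) x.snd : ℤˣ) : ℤ) * ((theta (m+2) y.snd : ℤˣ) : ℤ) := by
          rw [map_mul, Units.val_mul]
        rw [hm]
        linear_combination nc_id hσ x.snd y.snd z.snd
      · show (x.snd * y.snd) * z.snd = x.snd * (y.snd * z.snd)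
        exact mul_assoc _ _ _)
    (fun x => by
      refine Esp.ext ?_ ?_
      · show 0 + ((theta (m+2) (1 : SurfaceGroup (m+2)) : ℤˣ) : ℤ) * x.fst + σ (1, x.snd)
          = x.fst
        rw [map_one, nc_one_fst hσ, Units.val_one]
        ring
      · show 1 * x.snd = x.snd
        rw [one_mul])
    (fun x => by
      refine Esp.ext ?_ ?_
      · show (-(((theta (m+2) x.snd : ℤˣ) : ℤ) * x.fst) - σ (x.snd⁻¹, x.snd))
            + ((theta (m+2) x.snd⁻¹ : ℤˣ) : ℤ) * x.fst + σ (x.snd⁻¹, x.snd) = 0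
        rw [theta_inv]
        ring
      · show x.snd⁻¹ * x.snd = 1
        rw [inv_mul_cancel])

noncomputable instance espGroupI [hf : Fact (IsNC m σ)] : Group (Esp σ) :=
  espGroup hf.out

/-- Lift of the free group to the extension, with generator translation parts `c`. -/
noncomputable def Sh [Fact (IsNC m σ)] (c : Fin (m+2) → ℤ) :
    FreeGroup (Fin (m+2)) →* Esp σ :=
  FreeGroup.lift (fun i => ⟨c i, a i⟩)

noncomputable def mu [Fact (IsNC m σ)] (c : Fin (m+2) → ℤ)
    (w : FreeGroup (Fin (m+2))) : ℤ :=
  (Sh (σ := σ) c w).fst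

lemma Sh_of [Fact (IsNC m σ)] (c : Fin (m+2) → ℤ) (i : Fin (m+2)) :
    Sh (σ := σ) c (FreeGroup.of i) = ⟨c i, a i⟩ := by
  have hσ : IsNC m σ := Fact.out
  exact FreeGroup.lift_apply_of

lemma mu_of [Fact (IsNC m σ)] (c : Fin (m+2) → ℤ) (i : Fin (m+2)) :
    mu (σ := σ) c (FreeGroup.of i) = c i := by
  show (Sh (σ := σ) c (FreeGroup.of i)).fst = c i
  rw [Sh_of]

lemma Sh_snd [Fact (IsNC m σ)] (c : Fin (m+2) → ℤ) (w : FreeGroup (Fin (m+2))) :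
    (Sh (σ := σ) c w).snd = pmap m w := by
  have hσ : IsNC m σ := Fact.out
  let P : Esp σ →* SurfaceGroup (m+2) :=
    { toFun := Esp.snd, map_one' := rfl, map_mul' := fun x y => rfl }
  have hh : P.comp (Sh (σ := σ) c) = pmap m := by
    refine FreeGroup.ext_hom _ _ (fun i => ?_)
    show (Sh (σ := σ) c (FreeGroup.of i)).snd = pmap m (FreeGroup.of i)
    rw [Sh_of, pmap_of]
  exact DFunLike.congr_fun hh w

lemma mu_mul [Fact (IsNC m σ)] (c : Fin (m+2) → ℤ) (w v : FreeGroup (Fin (m+2))) :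
    mu (σ := σ) c (w * v) = mu (σ := σ) c w + ((theta (m+2) (pmap m w) : ℤˣ) : ℤ) * mu (σ := σ) c v
      + σ (pmap m w, pmap m v) := by
  have hσ : IsNC m σ := Fact.out
  show (Sh (σ := σ) c (w * v)).fst = _
  rw [map_mul]
  show (Sh (σ := σ) c w).fst + ((theta (m+2) (Sh (σ := σ) c w).snd : ℤˣ) : ℤ) * (Sh (σ := σ) c v).fst
      + σ ((Sh (σ := σ) c w).snd, (Sh (σ := σ) c v).snd) = _
  rw [Sh_snd, Sh_snd]
  rfl

lemma mu_one [Fact (IsNC m σ)] (c : Fin (m+2) → ℤ) : mu (σ := σ) c 1 = 0 := by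
  have hσ : IsNC m σ := Fact.out
  show (Sh (σ := σ) c (1 : FreeGroup (Fin (m+2)))).fst = 0
  rw [map_one]
  rfl

lemma mu_conj [Fact (IsNC m σ)] (c : Fin (m+2) → ℤ) (w x : FreeGroup (Fin (m+2)))
    (hx : pmap m x = 1) :
    mu (σ := σ) c (w * x * w⁻¹) = ((theta (m+2) (pmap m w) : ℤˣ) : ℤ) * mu (σ := σ) c x := by
  have hσ : IsNC m σ := Fact.out
  have hconj : ∀ (e : Esp σ) (z : ℤ),
      e * (⟨z, 1⟩ : Esp σ) * e⁻¹
        = (⟨((theta (m+2) e.snd : ℤˣ) : ℤ) * z, 1⟩ : Esp σ) := by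
    intro e z
    refine Esp.ext ?_ ?_
    · show (e.fst + ((theta (m+2) e.snd : ℤˣ) : ℤ) * z + σ (e.snd, (1 : SurfaceGroup (m+2))))
          + ((theta (m+2) (e.snd * 1) : ℤˣ) : ℤ)
            * (-(((theta (m+2) e.snd : ℤˣ) : ℤ) * e.fst) - σ (e.snd⁻¹, e.snd))
          + σ (e.snd * 1, e.snd⁻¹)
        = ((theta (m+2) e.snd : ℤˣ) : ℤ) * z
      rw [mul_one, nc_one_snd (Fact.out (p := IsNC m σ)), nc_inv (Fact.out (p := IsNC m σ))]
      linear_combination (-e.fst) * theta_sq e.snd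
    · show e.snd * 1 * e.snd⁻¹ = 1
      rw [mul_one, mul_inv_cancel]
  have hSx : Sh (σ := σ) c x = (⟨mu (σ := σ) c x, 1⟩ : Esp σ) := by
    refine Esp.ext rfl ?_
    rw [Sh_snd, hx]
  show (Sh (σ := σ) c (w * x * w⁻¹)).fst = _
  rw [map_mul, map_mul, map_inv, hSx, hconj (Sh (σ := σ) c w) (mu (σ := σ) c x)]
  show ((theta (m+2) (Sh (σ := σ) c w).snd : ℤˣ) : ℤ) * mu (σ := σ) c x = _
  rw [Sh_snd]

lemma mu_vanish [Fact (IsNC m σ)] (c : Fin (m+2) → ℤ)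
    (hrel : mu (σ := σ) c (rel (m+2)) = 0) :
    ∀ x, pmap m x = 1 → mu (σ := σ) c x = 0 := by
  have hNadd : ∀ x y, pmap m x = 1 → pmap m y = 1 →
      mu (σ := σ) c (x * y) = mu (σ := σ) c x + mu (σ := σ) c y := by
    intro x y hx hy
    rw [mu_mul (σ := σ) c x y, hx, hy, (Fact.out (p := IsNC m σ)).2, map_one, Units.val_one]
    ring
  set K : Subgroup (FreeGroup (Fin (m+2))) :=
    { carrier := {x | pmap m x = 1 ∧ mu (σ := σ) c x = 0}
      one_mem' := ⟨map_one _, mu_one (σ := σ) c⟩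
      mul_mem' := by
        rintro x y ⟨hx1, hx2⟩ ⟨hy1, hy2⟩
        exact ⟨by rw [map_mul, hx1, hy1, one_mul],
          by rw [hNadd x y hx1 hy1, hx2, hy2, add_zero]⟩
      inv_mem' := by
        rintro x ⟨hx1, hx2⟩
        have hxi : pmap m x⁻¹ = 1 := by rw [map_inv, hx1, inv_one]
        refine ⟨hxi, ?_⟩
        have h0 : mu (σ := σ) c (x * x⁻¹) = 0 := by rw [mul_inv_cancel]; exact mu_one (σ := σ) c
        rw [hNadd x x⁻¹ hx1 hxi, hx2, zero_add] at h0
        exact h0 } with hKdef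
  haveI : K.Normal := by
    constructor
    rintro x ⟨hx1, hx2⟩ g
    refine ⟨?_, ?_⟩
    · show pmap m (g * x * g⁻¹) = 1
      rw [map_mul, map_mul, map_inv, hx1, mul_one, mul_inv_cancel]
    · show mu (σ := σ) c (g * x * g⁻¹) = 0
      rw [mu_conj (σ := σ) c g x hx1, hx2, mul_zero]
  have hle : Subgroup.normalClosure ({rel (m+2)} : Set (FreeGroup (Fin (m+2)))) ≤ K := by
    refine Subgroup.normalClosure_le_normal ?_
    rintro r hr
    rw [Set.mem_singleton_iff] at hr
    subst hr
    exact ⟨pmap_rel, hrel⟩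
  intro x hx
  exact (hle ((QuotientGroup.eq_one_iff x).1 hx)).2

lemma mu_diff [Fact (IsNC m σ)] (c c' : Fin (m+2) → ℤ) :
    mu (σ := σ) c (rel (m+2)) - mu (σ := σ) c' (rel (m+2))
      = 2 * ∑ j : Fin (m+1), (c j.succ - c' j.succ) := by
  set D : FreeGroup (Fin (m+2)) →* Tw ℤ :=
    { toFun := fun w => ⟨mu (σ := σ) c w - mu (σ := σ) c' w, theta (m+2) (pmap m w)⟩
      map_one' := by
        refine Tw.ext ?_ ?_
        · show mu (σ := σ) c 1 - mu (σ := σ) c' 1 = 0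
          rw [mu_one (σ := σ), mu_one (σ := σ), sub_zero]
        · show theta (m+2) (pmap m 1) = 1
          rw [map_one, map_one]
      map_mul' := fun w v => by
        refine Tw.ext ?_ ?_
        · show mu (σ := σ) c (w * v) - mu (σ := σ) c' (w * v)
            = (mu (σ := σ) c w - mu (σ := σ) c' w)
              + ((theta (m+2) (pmap m w) : ℤˣ) : ℤ) • (mu (σ := σ) c v - mu (σ := σ) c' v)
          rw [mu_mul (σ := σ), mu_mul (σ := σ), smul_eq_mul]
          ring
        · show theta (m+2) (pmap m (w * v)) = theta (m+2) (pmap m w) * theta (m+2) (pmap m v)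
          rw [map_mul, map_mul] } with hDdef
  have hfox := fox D (fun i => by
    show theta (m+2) (pmap m (FreeGroup.of i)) = thetaGen i
    rw [pmap_of, theta_a])
  have hval : ∀ i, (D (FreeGroup.of i)).fst = c i - c' i := fun i => by
    show mu (σ := σ) c (FreeGroup.of i) - mu (σ := σ) c' (FreeGroup.of i) = c i - c' i
    rw [mu_of, mu_of]
  have hrel : (D (rel (m+2))).fst = mu (σ := σ) c (rel (m+2)) - mu (σ := σ) c' (rel (m+2)) := rfl
  rw [hrel] at hfox
  rw [Finset.sum_congr rfl (fun i _ => by rw [hval i])] at hfox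
  rw [sum_even (fun i => c i - c' i)] at hfox
  exact hfox

/-- The key invariant of a normalized 2-cocycle: the translation part of the image of the
relator under the canonical lift. -/
noncomputable def msig [Fact (IsNC m σ)] : ℤ := mu (σ := σ) (fun _ => 0) (rel (m+2))

lemma msig_add [Fact (IsNC m σ1)] [Fact (IsNC m σ2)] [Fact (IsNC m (σ1 + σ2))] :
    msig (σ := σ1 + σ2) = msig (σ := σ1) + msig (σ := σ2) := by
  set T : FreeGroup (Fin (m+2)) →* Esp (σ1 + σ2) :=
    { toFun := fun w => ⟨mu (σ := σ1) (fun _ => 0) w + mu (σ := σ2) (fun _ => 0) w, pmap m w⟩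
      map_one' := by
        refine Esp.ext ?_ ?_
        · show mu (σ := σ1) (fun _ => 0) 1 + mu (σ := σ2) (fun _ => 0) 1 = 0
          rw [mu_one (σ := σ1), mu_one (σ := σ2), add_zero]
        · show pmap m 1 = 1
          rw [map_one]
      map_mul' := fun w v => by
        refine Esp.ext ?_ ?_
        · show mu (σ := σ1) (fun _ => 0) (w * v) + mu (σ := σ2) (fun _ => 0) (w * v)
            = (mu (σ := σ1) (fun _ => 0) w + mu (σ := σ2) (fun _ => 0) w)
              + ((theta (m+2) (pmap m w) : ℤˣ) : ℤ)
                * (mu (σ := σ1) (fun _ => 0) v + mu (σ := σ2) (fun _ => 0) v)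
              + (σ1 + σ2) (pmap m w, pmap m v)
          rw [mu_mul (σ := σ1), mu_mul (σ := σ2), Pi.add_apply]
          ring
        · show pmap m (w * v) = pmap m w * pmap m v
          rw [map_mul] } with hTdef
  have hTS : T = Sh (σ := σ1 + σ2) (fun _ => 0) := by
    refine FreeGroup.ext_hom _ _ (fun i => ?_)
    rw [Sh_of]
    refine Esp.ext ?_ ?_
    · show mu (σ := σ1) (fun _ => 0) (FreeGroup.of i) + mu (σ := σ2) (fun _ => 0) (FreeGroup.of i)
        = 0
      rw [mu_of, mu_of, add_zero]
    · show pmap m (FreeGroup.of i) = a i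
      rw [pmap_of]
  have h3 : msig (σ := σ1 + σ2) = (T (rel (m+2))).fst := by rw [hTS]; rfl
  rw [h3]
  rfl

lemma cob_even [Fact (IsNC m σ)] (τ : SurfaceGroup (m+2) → ℤ) (hτ1 : τ 1 = 0)
    (hcob : ∀ g h : SurfaceGroup (m+2),
      ((theta (m+2) g : ℤˣ) : ℤ) * τ h - τ (g * h) + τ g = σ (g, h)) :
    2 ∣ msig (σ := σ) := by
  set C : FreeGroup (Fin (m+2)) →* Tw ℤ :=
    { toFun := fun w => ⟨mu (σ := σ) (fun _ => 0) w + τ (pmap m w), theta (m+2) (pmap m w)⟩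
      map_one' := by
        refine Tw.ext ?_ ?_
        · show mu (σ := σ) (fun _ => 0) 1 + τ (pmap m 1) = 0
          rw [mu_one (σ := σ), map_one, hτ1, add_zero]
        · show theta (m+2) (pmap m 1) = 1
          rw [map_one, map_one]
      map_mul' := fun w v => by
        refine Tw.ext ?_ ?_
        · show mu (σ := σ) (fun _ => 0) (w * v) + τ (pmap m (w * v))
            = (mu (σ := σ) (fun _ => 0) w + τ (pmap m w))
              + ((theta (m+2) (pmap m w) : ℤˣ) : ℤ)
                • (mu (σ := σ) (fun _ => 0) v + τ (pmap m v))
          rw [mu_mul (σ := σ), map_mul, smul_eq_mul]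
          linear_combination - hcob (pmap m w) (pmap m v)
        · show theta (m+2) (pmap m (w * v)) = theta (m+2) (pmap m w) * theta (m+2) (pmap m v)
          rw [map_mul, map_mul] } with hCdef
  have hfox := fox C (fun i => by
    show theta (m+2) (pmap m (FreeGroup.of i)) = thetaGen i
    rw [pmap_of, theta_a])
  have hval : ∀ i, (C (FreeGroup.of i)).fst = τ (a i) := fun i => by
    show mu (σ := σ) (fun _ => 0) (FreeGroup.of i) + τ (pmap m (FreeGroup.of i)) = τ (a i)
    rw [mu_of, pmap_of, zero_add]
  have hrel : (C (rel (m+2))).fst = msig (σ := σ) := by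
    show mu (σ := σ) (fun _ => 0) (rel (m+2)) + τ (pmap m (rel (m+2))) = msig (σ := σ)
    rw [pmap_rel, hτ1, add_zero]
    rfl
  rw [hrel] at hfox
  rw [Finset.sum_congr rfl (fun i _ => by rw [hval i])] at hfox
  rw [sum_even (fun i => τ (a i))] at hfox
  exact ⟨_, hfox⟩

lemma even_cob [Fact (IsNC m σ)] (heven : 2 ∣ msig (σ := σ)) :
    ∃ τ : SurfaceGroup (m+2) → ℤ, ∀ g h : SurfaceGroup (m+2),
      ((theta (m+2) g : ℤˣ) : ℤ) * τ h - τ (g * h) + τ g = σ (g, h) := by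
  obtain ⟨k, hk⟩ := heven
  set c : Fin (m+2) → ℤ := fun i => if i.1 = 1 then -k else 0 with hcdef
  have hrel0 : mu (σ := σ) c (rel (m+2)) = 0 := by
    have hd := mu_diff (σ := σ) c (fun _ => 0)
    have hsum : ∑ j : Fin (m+1), (c j.succ - (0 : ℤ)) = -k := by
      rw [Fin.sum_univ_succ]
      have h1 : c ((0 : Fin (m+1)).succ) - (0 : ℤ) = -k := by
        have hh : (((0 : Fin (m+1)).succ : Fin (m+2)) : ℕ) = 1 := rfl
        rw [hcdef]
        show (if (((0 : Fin (m+1)).succ : Fin (m+2)) : ℕ) = 1 then -k else 0) - (0:ℤ) = -k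
        rw [hh, if_pos rfl, sub_zero]
      have h2 : ∀ k' : Fin m, c (k'.succ.succ) - (0 : ℤ) = 0 := fun k' => by
        have hh : ((k'.succ.succ : Fin (m+2)) : ℕ) = k'.1 + 2 := rfl
        rw [hcdef]
        show (if ((k'.succ.succ : Fin (m+2)) : ℕ) = 1 then -k else 0) - (0:ℤ) = 0
        rw [hh, if_neg (by omega), sub_zero]
      rw [h1, Finset.sum_congr rfl (fun k' _ => h2 k'), Finset.sum_const_zero, add_zero]
    rw [hsum] at hd
    have hms : msig (σ := σ) = mu (σ := σ) (fun _ => 0) (rel (m+2)) := rfl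
    omega
  set τ : SurfaceGroup (m+2) → ℤ := fun g => -(mu (σ := σ) c (sec g)) with hτdef
  have hvan := mu_vanish (σ := σ) c hrel0
  have htau_mk : ∀ w, τ (pmap m w) = -(mu (σ := σ) c w) := by
    intro w
    have hx : pmap m (w⁻¹ * sec (pmap m w)) = 1 := by
      rw [map_mul, map_inv, pmap_sec, inv_mul_cancel]
    have hw : sec (pmap m w) = w * (w⁻¹ * sec (pmap m w)) := by group
    show -(mu (σ := σ) c (sec (pmap m w))) = -(mu (σ := σ) c w)
    rw [hw, mu_mul (σ := σ), hvan _ hx, hx, nc_one_snd (Fact.out (p := IsNC m σ)), mul_zero, add_zero, add_zero]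
  refine ⟨τ, fun g h => ?_⟩
  have h2 : τ (g * h) = -(mu (σ := σ) c (sec g * sec h)) := by
    have hp : pmap m (sec g * sec h) = g * h := by rw [map_mul, pmap_sec, pmap_sec]
    rw [← hp, htau_mk]
  have h3 : τ g = -(mu (σ := σ) c (sec g)) := rfl
  have h4 : τ h = -(mu (σ := σ) c (sec h)) := rfl
  have h5 := mu_mul (σ := σ) c (sec g) (sec h)
  rw [pmap_sec, pmap_sec] at h5
  rw [h2, h3, h4]
  linear_combination h5

end H2C

section H2D

open groupCohomology

variable {m : ℕ}

noncomputable def normc (σ : SurfaceGroup (m+2) × SurfaceGroup (m+2) → ℤ) :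
    SurfaceGroup (m+2) × SurfaceGroup (m+2) → ℤ :=
  fun p => σ p - ((theta (m+2) p.1 : ℤˣ) : ℤ) * σ (1, 1)

lemma normc_add (σ τ : SurfaceGroup (m+2) × SurfaceGroup (m+2) → ℤ) :
    normc (σ + τ) = normc σ + normc τ := by
  funext p
  show (σ p + τ p) - ((theta (m+2) p.1 : ℤˣ) : ℤ) * (σ (1,1) + τ (1,1))
    = (σ p - ((theta (m+2) p.1 : ℤˣ) : ℤ) * σ (1,1))
      + (τ p - ((theta (m+2) p.1 : ℤˣ) : ℤ) * τ (1,1))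
  ring

lemma normc_isNC {σ : SurfaceGroup (m+2) × SurfaceGroup (m+2) → ℤ}
    (hσ : σ ∈ cocycles₂ (Ztheta (m+2))) : IsNC m (normc σ) := by
  constructor
  · refine (mem_cocycles₂_iff (A := Ztheta (m+2)) _).2 ?_
    intro g h j
    have hid : σ (g * h, j) + σ (g, h)
        = ((theta (m+2) g : ℤˣ) : ℤ) * σ (h, j) + σ (g, h * j) :=
      (mem_cocycles₂_iff (A := Ztheta (m+2)) σ).1 hσ g h j
    show normc σ (g * h, j) + normc σ (g, h)
      = ((theta (m+2) g : ℤˣ) : ℤ) * normc σ (h, j) + normc σ (g, h * j)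
    have hm : ((theta (m+2) (g * h) : ℤˣ) : ℤ)
        = ((theta (m+2) g : ℤˣ) : ℤ) * ((theta (m+2) h : ℤˣ) : ℤ) := by
      rw [map_mul, Units.val_mul]
    unfold normc
    rw [hm]
    linear_combination hid
  · show σ (1,1) - ((theta (m+2) (1 : SurfaceGroup (m+2)) : ℤˣ) : ℤ) * σ (1,1) = 0
    rw [map_one, Units.val_one]
    ring

lemma msig_congr {σ τ : SurfaceGroup (m+2) × SurfaceGroup (m+2) → ℤ}
    (h : σ = τ) [Fact (IsNC m σ)] [Fact (IsNC m τ)] :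
    msig (σ := σ) = msig (σ := τ) := by
  subst h
  rfl

noncomputable def sfun (σ' : cocycles₂ (Ztheta (m+2))) :
    SurfaceGroup (m+2) × SurfaceGroup (m+2) → ℤ := fun p => tv (σ'.1 p)

lemma sfun_mem (σ' : cocycles₂ (Ztheta (m+2))) :
    sfun σ' ∈ cocycles₂ (Ztheta (m+2)) := σ'.2

/-- The `H²`-invariant of a 2-cocycle. -/
noncomputable def m2 (σ' : cocycles₂ (Ztheta (m+2))) : ℤ :=
  letI := Fact.mk (normc_isNC (sfun_mem σ'))
  msig (σ := normc (sfun σ'))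

lemma m2_add (σ' τ' : cocycles₂ (Ztheta (m+2))) :
    m2 (σ' + τ') = m2 σ' + m2 τ' := by
  letI ha := Fact.mk (normc_isNC (sfun_mem σ'))
  letI hb := Fact.mk (normc_isNC (sfun_mem τ'))
  letI hab := Fact.mk (normc_isNC (sfun_mem (σ' + τ')))
  have hfun : normc (sfun (σ' + τ')) = normc (sfun σ') + normc (sfun τ') := by
    have hs : sfun (σ' + τ') = sfun σ' + sfun τ' := rfl
    rw [hs, normc_add]
  haveI hab' : Fact (IsNC m (normc (sfun σ') + normc (sfun τ'))) := by
    rw [← hfun]; exact hab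
  have e1 : m2 (σ' + τ') = msig (σ := normc (sfun σ') + normc (sfun τ')) := by
    show msig (σ := normc (sfun (σ' + τ'))) = _
    exact msig_congr hfun
  rw [e1, msig_add]
  rfl

noncomputable def Psi (m : ℕ) : cocycles₂ (Ztheta (m+2)) →+ ZMod 2 :=
  AddMonoidHom.mk' (fun σ' => ((m2 σ' : ℤ) : ZMod 2))
    (fun σ' τ' => by
      show ((m2 (σ' + τ') : ℤ) : ZMod 2) = ((m2 σ' : ℤ) : ZMod 2) + ((m2 τ' : ℤ) : ZMod 2)
      rw [m2_add]
      push_cast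
      ring)

lemma Psi_zero_iff (σ' : cocycles₂ (Ztheta (m+2))) :
    Psi m σ' = 0 ↔ σ'.1 ∈ coboundaries₂ (Ztheta (m+2)) := by
  letI ha := Fact.mk (normc_isNC (sfun_mem σ'))
  constructor
  · intro h0
    have hdvd : (2 : ℤ) ∣ m2 σ' := by
      have h1 : ((m2 σ' : ℤ) : ZMod 2) = 0 := h0
      exact_mod_cast (ZMod.intCast_zmod_eq_zero_iff_dvd (m2 σ') 2).1 h1
    have heven : 2 ∣ msig (σ := normc (sfun σ')) := hdvd
    obtain ⟨τ, hτ⟩ := even_cob (σ := normc (sfun σ')) heven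
    refine ⟨fun g => ((τ g + tv (σ'.1 (1, 1)) : ℤ) : Ztheta (m+2)), funext fun ⟨g, h⟩ => ?_⟩
    show ((theta (m+2) g : ℤˣ) : ℤ) * (τ h + tv (σ'.1 (1, 1)))
        - (τ (g * h) + tv (σ'.1 (1, 1))) + (τ g + tv (σ'.1 (1, 1)))
      = tv (σ'.1 (g, h))
    have h2 := hτ g h
    have h3 : normc (sfun σ') (g, h)
        = tv (σ'.1 (g, h)) - ((theta (m+2) g : ℤˣ) : ℤ) * tv (σ'.1 (1, 1)) := rfl
    rw [h3] at h2
    linarith [h2]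
  · intro hmem
    obtain ⟨x, hx⟩ := LinearMap.mem_range.1 hmem
    have hx' : ∀ g h : SurfaceGroup (m+2),
        ((theta (m+2) g : ℤˣ) : ℤ) * tv (x h) - tv (x (g * h)) + tv (x g)
          = tv (σ'.1 (g, h)) := fun g h => congrFun hx (g, h)
    have h11 : tv (x 1) = tv (σ'.1 (1, 1)) := by
      have h := hx' 1 1
      rw [map_one, Units.val_one, mul_one] at h
      linarith [h]
    have heven := cob_even (σ := normc (sfun σ'))
      (fun g => tv (x g) - tv (x 1)) (by show tv (x 1) - tv (x 1) = 0; rw [sub_self]) (fun g h => by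
        have h4 : normc (sfun σ') (g, h)
            = tv (σ'.1 (g, h)) - ((theta (m+2) g : ℤˣ) : ℤ) * tv (σ'.1 (1, 1)) := rfl
        rw [h4]
        linear_combination hx' g h - ((theta (m+2) g : ℤˣ) : ℤ) * h11)
    have hdvd : (2 : ℤ) ∣ m2 σ' := heven
    show ((m2 σ' : ℤ) : ZMod 2) = 0
    exact (ZMod.intCast_zmod_eq_zero_iff_dvd (m2 σ') 2).2 (by exact_mod_cast hdvd)

lemma Psi_surj (m : ℕ) : Function.Surjective (Psi m) := by
  have hne : Psi m ⟨sigma0 m, sigma0_mem⟩ ≠ 0 := by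
    intro h0
    rw [Psi_zero_iff] at h0
    obtain ⟨x, hx⟩ := LinearMap.mem_range.1 h0
    refine sigma0_not_cob ⟨fun g => tv (x g), fun g h => ?_⟩
    exact congrFun hx (g, h)
  have h1 : Psi m ⟨sigma0 m, sigma0_mem⟩ = 1 := by
    revert hne
    generalize Psi m ⟨sigma0 m, sigma0_mem⟩ = u
    revert u
    decide
  intro z
  have hz : z = 0 ∨ z = 1 := by revert z; decide
  rcases hz with hz | hz
  · exact ⟨0, by rw [map_zero, hz]⟩
  · exact ⟨⟨sigma0 m, sigma0_mem⟩, by rw [h1, hz]⟩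

lemma Psi_ker (m : ℕ) :
    LinearMap.ker (Psi m).toIntLinearMap
      = (coboundaries₂ (Ztheta (m+2))).comap (cocycles₂ (Ztheta (m+2))).subtype := by
  ext σ'
  rw [LinearMap.mem_ker]
  exact Psi_zero_iff σ'

noncomputable def H2equiv (m : ℕ) :
    groupCohomology (Ztheta (m+2)) 2 ≃+ ZMod 2 := by
  have hs : Function.Surjective (H2π (Ztheta (m+2))).hom :=
    (ModuleCat.epi_iff_surjective _).1 inferInstance
  have e1 := (QuotientAddGroup.quotientKerEquivOfSurjective
    (H2π (Ztheta (m+2))).hom.toAddMonoidHom hs).symm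
  have e2 := QuotientAddGroup.quotientAddEquivOfEq
    (show (H2π (Ztheta (m+2))).hom.toAddMonoidHom.ker = ((Psi m).toIntLinearMap).toAddMonoidHom.ker by
      ext x
      change (H2π (Ztheta (m+2))) x = 0 ↔ x ∈ LinearMap.ker ((Psi m).toIntLinearMap)
      have hk := Psi_ker m
      exact (H2π_eq_zero_iff x).trans (Iff.of_eq (congrArg (fun S => x ∈ S) hk.symm)))
  have e3 := QuotientAddGroup.quotientKerEquivOfSurjective ((Psi m).toIntLinearMap).toAddMonoidHom (Psi_surj m)
  exact e1.trans (e2.trans e3)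

end H2D


/-- `H⁰(G,ℤ_{θ₁}) = 0`, `H¹(G,ℤ_{θ₁}) ≅ ℤ^{n-2} ⊕ ℤ/2` and
`H²(G,ℤ_{θ₁}) ≅ ℤ/2`. -/
theorem statement16 (n : ℕ) (hn : 2 ≤ n) :
    Subsingleton (groupCohomology (Ztheta n) 0) ∧
    Nonempty (groupCohomology (Ztheta n) 1 ≃+ (Fin (n - 2) → ℤ) × ZMod 2) ∧
    Nonempty (groupCohomology (Ztheta n) 2 ≃+ ZMod 2) := by
  obtain ⟨m, rfl⟩ : ∃ m, n = m + 2 := ⟨n - 2, by omega⟩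
  exact ⟨H0_subsingleton m, ⟨H1equiv m⟩, ⟨H2equiv m⟩⟩

end SurfaceNonOr
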